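/- Let F and B be n × n column-stochastic matrices, let 0 < α₁, α₂, α₃ < 1, and let d ∈ ℝⁿ. Then the mapping I(t) = α₁ F P₊(t) + α₂ B P₋(t) + α₃ d is a contraction on (ℝⁿ, ‖·‖₁) with Lipschitz constant at most max(α₁, α₂) < 1; that is, for all t₁, t₂ ∈ ℝⁿ, ‖I(t₁) − I(t₂)‖₁ ≤ max(α₁, α₂) ‖t₁ − t₂‖₁. -/
import Mathlib


open Finset Filter

/-- Replace negative components by zero. -/
def Ppos {n : ℕ} (t : Fin n → ℝ) : Fin n → ℝ := fun i => max (t i) 0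

/-- Replace positive components by zero. -/
def Pneg {n : ℕ} (t : Fin n → ℝ) : Fin n → ℝ := fun i => min (t i) 0

/-- ℓ¹ norm on ℝⁿ. -/
def l1 {n : ℕ} (x : Fin n → ℝ) : ℝ := ∑ i, |x i|

/-- A matrix is column-stochastic if entries are nonnegative and each column sums to 1. -/
def ColStochastic {n : ℕ} (F : Matrix (Fin n) (Fin n) ℝ) : Prop :=
  (∀ i j, 0 ≤ F i j) ∧ ∀ j, ∑ i, F i j = 1

lemma key_abs (a b : ℝ) : |max a 0 - max b 0| + |min a 0 - min b 0| = |a - b| := by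
  rcases le_total a 0 with ha | ha <;> rcases le_total b 0 with hb | hb <;>
    rcases le_total a b with hab | hab <;>
    simp [max_eq_left, max_eq_right, min_eq_left, min_eq_right, ha, hb, abs_of_nonpos,
      abs_of_nonneg, abs_sub_comm, *] <;> linarith

lemma l1_mulVec_le {n : ℕ} (F : Matrix (Fin n) (Fin n) ℝ) (hF : ColStochastic F)
    (v : Fin n → ℝ) : l1 (F.mulVec v) ≤ l1 v := by
  unfold l1 Matrix.mulVec dotProduct
  calc ∑ i, |∑ j, F i j * v j| ≤ ∑ i, ∑ j, F i j * |v j| := by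
        refine Finset.sum_le_sum fun i _ => ?_
        refine (Finset.abs_sum_le_sum_abs _ _).trans (le_of_eq ?_)
        refine Finset.sum_congr rfl fun j _ => ?_
        rw [abs_mul, abs_of_nonneg (hF.1 i j)]
    _ = ∑ j, (∑ i, F i j) * |v j| := by rw [Finset.sum_comm]; simp [Finset.sum_mul]
    _ = ∑ j, |v j| := by simp [hF.2]

lemma l1_add_le {n : ℕ} (x y : Fin n → ℝ) : l1 (x + y) ≤ l1 x + l1 y := by
  unfold l1
  rw [← Finset.sum_add_distrib]
  exact Finset.sum_le_sum fun i _ => abs_add_le _ _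

lemma l1_smul {n : ℕ} (c : ℝ) (x : Fin n → ℝ) : l1 (c • x) = |c| * l1 x := by
  unfold l1
  simp [abs_mul, Finset.mul_sum]

theorem repRank_iteration_contractive {n : ℕ} (F B : Matrix (Fin n) (Fin n) ℝ)
    (hF : ColStochastic F) (hB : ColStochastic B)
    (α₁ α₂ α₃ : ℝ) (hα₁ : 0 < α₁) (hα₁' : α₁ < 1) (hα₂ : 0 < α₂) (hα₂' : α₂ < 1)
    (hα₃ : 0 < α₃) (hα₃' : α₃ < 1) (d : Fin n → ℝ) (t₁ t₂ : Fin n → ℝ) :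
    l1 ((α₁ • F.mulVec (Ppos t₁) + α₂ • B.mulVec (Pneg t₁) + α₃ • d)
        - (α₁ • F.mulVec (Ppos t₂) + α₂ • B.mulVec (Pneg t₂) + α₃ • d))
      ≤ max α₁ α₂ * l1 (t₁ - t₂) := by
  have harg : (α₁ • F.mulVec (Ppos t₁) + α₂ • B.mulVec (Pneg t₁) + α₃ • d)
        - (α₁ • F.mulVec (Ppos t₂) + α₂ • B.mulVec (Pneg t₂) + α₃ • d)
      = α₁ • F.mulVec (Ppos t₁ - Ppos t₂) + α₂ • B.mulVec (Pneg t₁ - Pneg t₂) := by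
    rw [Matrix.mulVec_sub, Matrix.mulVec_sub, smul_sub, smul_sub]
    abel
  rw [harg]
  have h1 := l1_mulVec_le F hF (Ppos t₁ - Ppos t₂)
  have h2 := l1_mulVec_le B hB (Pneg t₁ - Pneg t₂)
  have hsum : l1 (Ppos t₁ - Ppos t₂) + l1 (Pneg t₁ - Pneg t₂) = l1 (t₁ - t₂) := by
    unfold l1
    rw [← Finset.sum_add_distrib]
    refine Finset.sum_congr rfl fun i _ => ?_
    simpa [Ppos, Pneg] using key_abs (t₁ i) (t₂ i)
  have hm1 : α₁ ≤ max α₁ α₂ := le_max_left _ _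
  have hm2 : α₂ ≤ max α₁ α₂ := le_max_right _ _
  have hPn : 0 ≤ l1 (Ppos t₁ - Ppos t₂) := Finset.sum_nonneg fun i _ => abs_nonneg _
  have hNn : 0 ≤ l1 (Pneg t₁ - Pneg t₂) := Finset.sum_nonneg fun i _ => abs_nonneg _
  calc l1 (α₁ • F.mulVec (Ppos t₁ - Ppos t₂) + α₂ • B.mulVec (Pneg t₁ - Pneg t₂))
      ≤ l1 (α₁ • F.mulVec (Ppos t₁ - Ppos t₂)) + l1 (α₂ • B.mulVec (Pneg t₁ - Pneg t₂)) :=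
        l1_add_le _ _
    _ = α₁ * l1 (F.mulVec (Ppos t₁ - Ppos t₂)) + α₂ * l1 (B.mulVec (Pneg t₁ - Pneg t₂)) := by
        rw [l1_smul, l1_smul, abs_of_pos hα₁, abs_of_pos hα₂]
    _ ≤ max α₁ α₂ * l1 (Ppos t₁ - Ppos t₂) + max α₁ α₂ * l1 (Pneg t₁ - Pneg t₂) := by
        have := l1_mulVec_le F hF (Ppos t₁ - Ppos t₂)
        nlinarith [l1_mulVec_le F hF (Ppos t₁ - Ppos t₂), l1_mulVec_le B hB (Pneg t₁ - Pneg t₂),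
          Finset.sum_nonneg (fun i (_ : i ∈ Finset.univ) => abs_nonneg ((F.mulVec (Ppos t₁ - Ppos t₂)) i)),
          Finset.sum_nonneg (fun i (_ : i ∈ Finset.univ) => abs_nonneg ((B.mulVec (Pneg t₁ - Pneg t₂)) i))]
    _ = max α₁ α₂ * l1 (t₁ - t₂) := by rw [← hsum]; ring
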